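/- Let A and B be independent N×N real random matrices, and assume B is orthogonally invariant. Then for every k = 1,…,N, the k×k leading principal submatrix of A B Aᵀ has the same distribution as ((AAᵀ)^{[k]})^{1/2} · B^{[k]} · ((AAᵀ)^{[k]})^{1/2}, where x^{[k]} denotes the k×k leading principal submatrix of x and ((AAᵀ)^{[k]})^{1/2} is the positive semidefinite square root of the positive semidefinite matrix (AAᵀ)^{[k]}. -/

import Mathlib

open MeasureTheory ProbabilityTheory Matrix Filter
open scoped ENNReal Topology

noncomputable section

/-- The space of `N × N` real matrices. -/
abbrev Mat (N : ℕ) := Matrix (Fin N) (Fin N) ℝ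

instance (N : ℕ) : MeasurableSpace (Mat N) :=
  inferInstanceAs (MeasurableSpace (Fin N → Fin N → ℝ))

instance (N : ℕ) : BorelSpace (Mat N) :=
  inferInstanceAs (BorelSpace (Fin N → Fin N → ℝ))

open scoped Classical in
/-- The eigenvalues of a matrix (junk value `0` if the matrix is not symmetric). -/
def eigs {N : ℕ} (s : Mat N) : Fin N → ℝ :=
  if h : s.IsHermitian then h.eigenvalues else fun _ => 0

/-- The largest eigenvalue of a symmetric matrix. -/
def lambdaMax {N : ℕ} (s : Mat N) : ℝ := ⨆ i, eigs s i

/-- The eigenvalues of a symmetric matrix in nonincreasing order: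
`eigDesc s k` is the `(k+1)`-th largest eigenvalue `λ_{k+1}(s)`. -/
def eigDesc {N : ℕ} (s : Mat N) (k : Fin N) : ℝ :=
  (eigs s ∘ Tuple.sort (eigs s)) k.rev

open scoped Classical in
/-- The positive semidefinite square root of a positive semidefinite matrix
(junk value `0` otherwise). -/
def msqrt {N : ℕ} (a : Mat N) : Mat N :=
  if h : a.PosSemidef then
    (h.1.eigenvectorUnitary : Mat N) * diagonal (Real.sqrt ∘ h.1.eigenvalues) *
      (star h.1.eigenvectorUnitary : Mat N) else 0

/-- `log⁺ x = max (log x) 0`. -/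
def logPlus (x : ℝ) : ℝ := max (Real.log x) 0

/-- The expectation of a (not necessarily integrable) real random variable, with values in
`[-∞, +∞]`: the difference of the lower integrals of the positive and negative parts. -/
def sInt {Ω : Type*} [MeasurableSpace Ω] (P : Measure Ω) (f : Ω → ℝ) : EReal :=
  ((∫⁻ ω, ENNReal.ofReal (f ω) ∂P : ℝ≥0∞) : EReal) -
    ((∫⁻ ω, ENNReal.ofReal (-f ω) ∂P : ℝ≥0∞) : EReal)

/-- `leftProd A n = A₁ ⋯ A_n` (`0`-indexed: `A 0 * A 1 * ⋯ * A (n-1)`). -/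
def leftProd {Ω : Type*} {N : ℕ} (A : ℕ → Ω → Mat N) : ℕ → Ω → Mat N
  | 0 => fun _ => 1
  | n + 1 => fun ω => leftProd A n ω * A n ω

/-- The top Lyapunov exponent
`γ = inf_{n ≥ 1} (1/n) E[log λ_max(A₁ ⋯ A_n A_nᵀ ⋯ A₁ᵀ)]`, a value in `[-∞, +∞)`. -/
def lyap {Ω : Type*} [MeasurableSpace Ω] {N : ℕ} (P : Measure Ω) (A : ℕ → Ω → Mat N) : EReal :=
  ⨅ n : ℕ, (((1 : ℝ) / (n + 1) : ℝ) : EReal) *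
    sInt P (fun ω => Real.log (lambdaMax (leftProd A (n + 1) ω * (leftProd A (n + 1) ω)ᵀ)))

/-- The `k × k` leading principal submatrix. -/
def subK {N k : ℕ} (hk : k ≤ N) (x : Mat N) : Mat k :=
  x.submatrix (Fin.castLE hk) (Fin.castLE hk)

end
section AuxLemmas
open Matrix Filter

noncomputable section

/-! ### Spectral decomposition packaged -/

lemma mat_spectral {n : ℕ} (a : Mat n) (ha : a.PosSemidef) :
    ∃ (Q : Mat n) (d : Fin n → ℝ), Qᵀ * Q = 1 ∧ Q * Qᵀ = 1 ∧ (∀ i, 0 ≤ d i) ∧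
      (∀ i, d i ≤ a.trace) ∧ 0 ≤ a.trace ∧
      a = Q * Matrix.diagonal d * Qᵀ ∧
      msqrt a = Q * Matrix.diagonal (fun i => Real.sqrt (d i)) * Qᵀ := by
  have hH := ha.1
  set Q : Mat n := (hH.eigenvectorUnitary : Mat n) with hQdef
  set d : Fin n → ℝ := hH.eigenvalues with hddef
  have hstar : star Q = Qᵀ := by
    rw [Matrix.star_eq_conjTranspose, Matrix.conjTranspose_eq_transpose_of_trivial]
  have hQtQ : Qᵀ * Q = 1 := by
    rw [← hstar]; exact Unitary.coe_star_mul_self hH.eigenvectorUnitary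
  have hQQt : Q * Qᵀ = 1 := by
    rw [← hstar]; exact Unitary.coe_mul_star_self hH.eigenvectorUnitary
  have hdiag : Matrix.diagonal (RCLike.ofReal ∘ d : Fin n → ℝ) = Matrix.diagonal d := by
    congr 1
  have hdecomp : a = Q * Matrix.diagonal d * Qᵀ := by
    conv_lhs => rw [hH.spectral_theorem, Unitary.conjStarAlgAut_apply]
    rw [hstar, hdiag]
  have hd0 : ∀ i, 0 ≤ d i := fun i => ha.eigenvalues_nonneg i
  have htrace : a.trace = ∑ i, d i := by
    conv_lhs => rw [hdecomp]
    rw [Matrix.trace_mul_comm, ← Matrix.mul_assoc, hQtQ, Matrix.one_mul,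
      Matrix.trace_diagonal]
  have htr0 : 0 ≤ a.trace := htrace ▸ Finset.sum_nonneg fun i _ => hd0 i
  have hdle : ∀ i, d i ≤ a.trace := by
    intro i
    rw [htrace]
    exact Finset.single_le_sum (fun j _ => hd0 j) (Finset.mem_univ i)
  refine ⟨Q, d, hQtQ, hQQt, hd0, hdle, htr0, hdecomp, ?_⟩
  have : msqrt a = (hH.eigenvectorUnitary : Mat n) * diagonal (Real.sqrt ∘ hH.eigenvalues) *
      (star hH.eigenvectorUnitary : Mat n) := dif_pos ha
  rw [this]
  exact congrArg (fun X => Q * Matrix.diagonal (fun i => Real.sqrt (d i)) * X) hstar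

/-! ### Heron (Babylonian) iteration for the square root -/

def heron : ℕ → ℝ → ℝ
  | 0, _ => 0
  | m + 1, t => heron m t + (t - heron m t ^ 2) / 2

lemma heron_le_sqrt {t : ℝ} (h0 : 0 ≤ t) (h1 : t ≤ 1) : ∀ m, heron m t ≤ Real.sqrt t := by
  intro m
  induction m with
  | zero => simpa [heron] using Real.sqrt_nonneg t
  | succ m ih =>
    have hs2 : Real.sqrt t ^ 2 = t := Real.sq_sqrt h0
    have hs1 : Real.sqrt t ≤ 1 := by
      rw [show (1 : ℝ) = Real.sqrt 1 by simp]
      exact Real.sqrt_le_sqrt h1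
    have hfact : 0 ≤ (Real.sqrt t - heron m t) * (2 - Real.sqrt t - heron m t) :=
      mul_nonneg (by linarith) (by linarith)
    show heron m t + (t - heron m t ^ 2) / 2 ≤ Real.sqrt t
    nlinarith [hfact]

lemma heron_nonneg {t : ℝ} (h0 : 0 ≤ t) (h1 : t ≤ 1) : ∀ m, 0 ≤ heron m t := by
  intro m
  induction m with
  | zero => simp [heron]
  | succ m ih =>
    have h2 : heron m t ^ 2 ≤ t := by
      have := heron_le_sqrt h0 h1 m
      nlinarith [Real.sq_sqrt h0]
    show 0 ≤ heron m t + (t - heron m t ^ 2) / 2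
    linarith

lemma heron_mono {t : ℝ} (h0 : 0 ≤ t) (h1 : t ≤ 1) :
    Monotone fun m => heron m t := by
  refine monotone_nat_of_le_succ fun m => ?_
  have h2 : heron m t ^ 2 ≤ t := by
    have := heron_le_sqrt h0 h1 m
    have := heron_nonneg h0 h1 m
    nlinarith [Real.sq_sqrt h0]
  show heron m t ≤ heron m t + (t - heron m t ^ 2) / 2
  linarith

lemma heron_tendsto {t : ℝ} (h0 : 0 ≤ t) (h1 : t ≤ 1) :
    Tendsto (fun m => heron m t) atTop (𝓝 (Real.sqrt t)) := by
  have hbdd : BddAbove (Set.range fun m => heron m t) := by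
    refine ⟨Real.sqrt t, ?_⟩
    rintro x ⟨m, rfl⟩
    exact heron_le_sqrt h0 h1 m
  have hconv := tendsto_atTop_ciSup (heron_mono h0 h1) hbdd
  set L := ⨆ m, heron m t with hL
  have h2 : Tendsto (fun m => heron (m + 1) t) atTop (𝓝 L) :=
    hconv.comp (tendsto_add_atTop_nat 1)
  have h3 : Tendsto (fun m => heron m t + (t - heron m t ^ 2) / 2) atTop
      (𝓝 (L + (t - L ^ 2) / 2)) :=
    hconv.add ((tendsto_const_nhds.sub (hconv.pow 2)).div_const 2)
  have hfix : L + (t - L ^ 2) / 2 = L := tendsto_nhds_unique h3 h2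
  have hL2 : L ^ 2 = t := by linarith
  have hL0 : 0 ≤ L := by
    have : heron 0 t ≤ L := le_ciSup hbdd 0
    simpa [heron] using this
  have : Real.sqrt t = L := by rw [← hL2, Real.sqrt_sq hL0]
  rwa [this]
end
end AuxLemmas
noncomputable section
open Matrix Filter

/-! ### Matrix Heron iteration -/

def mheron {n : ℕ} (a : Mat n) : ℕ → Mat n
  | 0 => 0
  | m + 1 => mheron a m + (2⁻¹ : ℝ) • (a - mheron a m * mheron a m)

lemma continuous_mheron {n : ℕ} (m : ℕ) : Continuous fun a : Mat n => mheron a m := by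
  induction m with
  | zero => simpa [mheron] using continuous_const
  | succ m ih =>
    exact ih.add ((continuous_id.sub (ih.matrix_mul ih)).const_smul (2⁻¹ : ℝ))

lemma mheron_conj {n : ℕ} (Q : Mat n) (dv : Fin n → ℝ) (hQ : Qᵀ * Q = 1) (m : ℕ) :
    mheron (Q * Matrix.diagonal dv * Qᵀ) m
      = Q * Matrix.diagonal (fun i => heron m (dv i)) * Qᵀ := by
  have conj_mul : ∀ e f : Fin n → ℝ,
      (Q * Matrix.diagonal e * Qᵀ) * (Q * Matrix.diagonal f * Qᵀ)
        = Q * (Matrix.diagonal e * Matrix.diagonal f) * Qᵀ := by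
    intro e f
    calc (Q * Matrix.diagonal e * Qᵀ) * (Q * Matrix.diagonal f * Qᵀ)
        = Q * Matrix.diagonal e * ((Qᵀ * Q) * (Matrix.diagonal f * Qᵀ)) := by
          simp only [Matrix.mul_assoc]
      _ = Q * (Matrix.diagonal e * Matrix.diagonal f) * Qᵀ := by
          rw [hQ, Matrix.one_mul]
          simp only [Matrix.mul_assoc]
  have conj_sub : ∀ e f : Fin n → ℝ,
      Q * Matrix.diagonal e * Qᵀ - Q * Matrix.diagonal f * Qᵀ
        = Q * Matrix.diagonal (e - f) * Qᵀ := by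
    intro e f
    rw [← Matrix.sub_mul, ← Matrix.mul_sub, Matrix.diagonal_sub]
    rfl
  have conj_smul : ∀ (c : ℝ) (e : Fin n → ℝ),
      c • (Q * Matrix.diagonal e * Qᵀ) = Q * Matrix.diagonal (fun i => c * e i) * Qᵀ := by
    intro c e
    calc c • (Q * Matrix.diagonal e * Qᵀ)
        = (c • (Q * Matrix.diagonal e)) * Qᵀ := (smul_mul_assoc _ _ _).symm
      _ = (Q * (c • Matrix.diagonal e)) * Qᵀ := by rw [mul_smul_comm]
      _ = Q * Matrix.diagonal (fun i => c * e i) * Qᵀ := by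
          rw [← Matrix.diagonal_smul]
          rfl
  have conj_add : ∀ e f : Fin n → ℝ,
      Q * Matrix.diagonal e * Qᵀ + Q * Matrix.diagonal f * Qᵀ
        = Q * Matrix.diagonal (fun i => e i + f i) * Qᵀ := by
    intro e f
    rw [← Matrix.add_mul, ← Matrix.mul_add, Matrix.diagonal_add]
  induction m with
  | zero =>
    show (0 : Mat n) = _
    have : (fun i : Fin n => heron 0 (dv i)) = fun _ => (0 : ℝ) := by
      funext i; simp [heron]
    rw [this]
    simp
  | succ m ih =>
    show mheron _ m + (2⁻¹ : ℝ) • (Q * Matrix.diagonal dv * Qᵀ - mheron _ m * mheron _ m) = _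
    rw [ih, conj_mul, Matrix.diagonal_mul_diagonal, conj_sub, conj_smul, conj_add]
    congr 1
    congr 1
    congr 1
    simp only [Pi.sub_apply, heron]
    ring
end
noncomputable section
open Matrix Filter MeasureTheory

lemma measurableSet_posSemidef {n : ℕ} : MeasurableSet {a : Mat n | a.PosSemidef} := by
  have hset : {a : Mat n | a.PosSemidef}
      = {a : Mat n | aᴴ = a} ∩ ⋂ x : Fin n → ℝ, {a : Mat n | 0 ≤ star x ⬝ᵥ (a *ᵥ x)} := by
    ext a
    simp only [Set.mem_setOf_eq, Set.mem_inter_iff, Set.mem_iInter]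
    exact Matrix.posSemidef_iff_dotProduct_mulVec
  rw [hset]
  refine MeasurableSet.inter ?_ ?_
  · exact (isClosed_eq (continuous_id.matrix_conjTranspose) continuous_id).measurableSet
  · refine (isClosed_iInter fun x => ?_).measurableSet
    exact isClosed_le continuous_const
      (Continuous.dotProduct continuous_const (continuous_id.matrix_mulVec continuous_const))

lemma measurable_entry {n : ℕ} {α : Type*} [MeasurableSpace α] {f : α → Mat n}
    (hf : Measurable f) (i j : Fin n) : Measurable fun x => f x i j :=
  (measurable_pi_apply j).comp ((measurable_pi_apply i).comp hf)

lemma measurable_matMul {n : ℕ} {α : Type*} [MeasurableSpace α] {f g : α → Mat n}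
    (hf : Measurable f) (hg : Measurable g) : Measurable fun x => f x * g x := by
  refine measurable_pi_lambda _ fun i => measurable_pi_lambda _ fun j => ?_
  simp only [Matrix.mul_apply]
  exact Finset.measurable_sum _ fun l _ => (measurable_entry hf i l).mul (measurable_entry hg l j)

instance matPseudoMetrizable {n : ℕ} : TopologicalSpace.PseudoMetrizableSpace (Mat n) :=
  inferInstanceAs (TopologicalSpace.PseudoMetrizableSpace (Fin n → Fin n → ℝ))

lemma measurable_msqrt {n : ℕ} : Measurable fun a : Mat n => msqrt a := by
  classical
  have htr : Measurable fun a : Mat n => a.trace := by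
    unfold Matrix.trace
    exact Finset.measurable_sum _ fun i _ => measurable_entry measurable_id i i
  have hFmeas : ∀ m : ℕ, Measurable fun a : Mat n =>
      if a.PosSemidef then Real.sqrt (1 + a.trace) • mheron ((1 + a.trace)⁻¹ • a) m else 0 := by
    intro m
    refine Measurable.ite measurableSet_posSemidef ?_ measurable_const
    have hsc : Measurable fun a : Mat n => (1 + a.trace)⁻¹ • a := by
      refine measurable_pi_lambda _ fun i => measurable_pi_lambda _ fun j => ?_
      simp only [Matrix.smul_apply, smul_eq_mul]
      exact ((measurable_const.add htr).inv).mul (measurable_entry measurable_id i j)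
    have h2 : Measurable fun a : Mat n => mheron ((1 + a.trace)⁻¹ • a) m :=
      ((continuous_mheron m).measurable).comp hsc
    refine measurable_pi_lambda _ fun i => measurable_pi_lambda _ fun j => ?_
    simp only [Matrix.smul_apply, smul_eq_mul]
    exact (Real.continuous_sqrt.measurable.comp (measurable_const.add htr)).mul
      (measurable_entry h2 i j)
  refine measurable_of_tendsto_metrizable hFmeas (tendsto_pi_nhds.2 fun a => ?_)
  by_cases ha : a.PosSemidef
  · obtain ⟨Q, d, hQtQ, hQQt, hd0, hdle, htr0, hdecomp, hsqrt⟩ := mat_spectral a ha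
    have hc0 : (0 : ℝ) < 1 + a.trace := by linarith
    have hcne : (1 + a.trace) ≠ 0 := ne_of_gt hc0
    have hscale : (1 + a.trace)⁻¹ • a
        = Q * Matrix.diagonal (fun i => (1 + a.trace)⁻¹ * d i) * Qᵀ := by
      conv_lhs => rw [hdecomp]
      rw [← smul_mul_assoc, ← mul_smul_comm, ← Matrix.diagonal_smul, ← hdecomp]
      rfl
    have hkey : ∀ m, (if a.PosSemidef then
          Real.sqrt (1 + a.trace) • mheron ((1 + a.trace)⁻¹ • a) m else 0)
        = Real.sqrt (1 + a.trace) •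
            (Q * Matrix.diagonal (fun i => heron m ((1 + a.trace)⁻¹ * d i)) * Qᵀ) := by
      intro m
      rw [if_pos ha, hscale, mheron_conj _ _ hQtQ]
    simp only [hkey]
    have hcont : Continuous fun e : Fin n → ℝ =>
        Real.sqrt (1 + a.trace) • ((Q * Matrix.diagonal e * Qᵀ : Mat n)) :=
      (((continuous_const.matrix_mul (continuous_id.matrix_diagonal)).matrix_mul
        continuous_const).const_smul (Real.sqrt (1 + a.trace)))
    have hptw : Tendsto (fun m => fun i => heron m ((1 + a.trace)⁻¹ * d i)) atTop
        (𝓝 fun i => Real.sqrt ((1 + a.trace)⁻¹ * d i)) := by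
      refine tendsto_pi_nhds.2 fun i => heron_tendsto ?_ ?_
      · exact mul_nonneg (inv_nonneg.2 hc0.le) (hd0 i)
      · have h1 : d i ≤ 1 + a.trace := by have := hdle i; linarith
        calc (1 + a.trace)⁻¹ * d i ≤ (1 + a.trace)⁻¹ * (1 + a.trace) :=
              mul_le_mul_of_nonneg_left h1 (inv_nonneg.2 hc0.le)
          _ = 1 := inv_mul_cancel₀ hcne
    have hfin : Real.sqrt (1 + a.trace) •
        (Q * Matrix.diagonal (fun i => Real.sqrt ((1 + a.trace)⁻¹ * d i)) * Qᵀ)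
          = msqrt a := by
      rw [hsqrt]
      rw [← smul_mul_assoc, ← mul_smul_comm, ← Matrix.diagonal_smul]
      have harr : Real.sqrt (1 + a.trace) • (fun i => Real.sqrt ((1 + a.trace)⁻¹ * d i))
          = fun i => Real.sqrt (d i) := by
        funext i
        simp only [Pi.smul_apply, smul_eq_mul]
        rw [← Real.sqrt_mul hc0.le, mul_inv_cancel_left₀ hcne]
      rw [harr]
    rw [← hfin]
    exact (hcont.tendsto _).comp hptw
  · have : (fun m => if a.PosSemidef then
        Real.sqrt (1 + a.trace) • mheron ((1 + a.trace)⁻¹ • a) m else 0) = fun _ => (0 : Mat n) := by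
      funext m; rw [if_neg ha]
    rw [this, show msqrt a = 0 from dif_neg ha]
    exact tendsto_const_nhds
end
noncomputable section
open Matrix Filter

/-! ### The inclusion matrix `emb` -/

def emb {k N : ℕ} (hk : k ≤ N) : Matrix (Fin k) (Fin N) ℝ :=
  Matrix.of fun i j => if (Fin.castLE hk i : Fin N) = j then 1 else 0

lemma emb_mul {k N : ℕ} (hk : k ≤ N) {p : Type*} [Fintype p] (x : Matrix (Fin N) p ℝ) :
    emb hk * x = x.submatrix (Fin.castLE hk) id := by
  ext i j
  rw [Matrix.mul_apply, Matrix.submatrix_apply, Finset.sum_eq_single (Fin.castLE hk i)]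
  · simp [emb]
  · intro b _ hb
    have hne : (Fin.castLE hk i : Fin N) ≠ b := fun h => hb h.symm
    simp [emb, hne]
  · simp

lemma mul_embT {k N : ℕ} (hk : k ≤ N) {p : Type*} [Fintype p] (x : Matrix p (Fin N) ℝ) :
    x * (emb hk)ᵀ = x.submatrix id (Fin.castLE hk) := by
  ext i j
  rw [Matrix.mul_apply, Matrix.submatrix_apply, Finset.sum_eq_single (Fin.castLE hk j)]
  · simp [emb]
  · intro b _ hb
    have hne : (Fin.castLE hk j : Fin N) ≠ b := fun h => hb h.symm
    simp [emb, hne]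
  · simp

lemma subK_eq {k N : ℕ} (hk : k ≤ N) (x : Mat N) :
    subK hk x = emb hk * x * (emb hk)ᵀ := by
  rw [emb_mul, mul_embT]
  simp [subK, Matrix.submatrix_submatrix, Function.comp_def]

lemma emb_mul_embT {k N : ℕ} (hk : k ≤ N) : emb hk * (emb hk)ᵀ = 1 := by
  rw [mul_embT]
  ext i j
  simp only [Matrix.submatrix_apply, id_eq, emb, Matrix.of_apply, Matrix.one_apply,
    Fin.castLE_inj]

/-! ### `msqrt` basic facts -/

lemma posSemidef_mul_transpose {k N : ℕ} (m : Matrix (Fin k) (Fin N) ℝ) :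
    (m * mᵀ).PosSemidef := by
  rw [← Matrix.conjTranspose_eq_transpose_of_trivial]
  exact Matrix.posSemidef_self_mul_conjTranspose m

lemma msqrt_transpose {n : ℕ} (x : Mat n) : (msqrt x)ᵀ = msqrt x := by
  by_cases h : x.PosSemidef
  · have e : msqrt x = (h.1.eigenvectorUnitary : Mat n) * diagonal (Real.sqrt ∘ h.1.eigenvalues) *
        ((h.1.eigenvectorUnitary : Mat n))ᵀ := by
      rw [← Matrix.conjTranspose_eq_transpose_of_trivial, ← Matrix.star_eq_conjTranspose,
        ← Unitary.coe_star]
      exact dif_pos h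
    rw [e, Matrix.transpose_mul, Matrix.transpose_mul, Matrix.transpose_transpose,
      Matrix.diagonal_transpose, Matrix.mul_assoc]
  · rw [show msqrt x = 0 from dif_neg h]
    exact Matrix.transpose_zero

/-! ### Existence of the orthogonal factor -/

lemma exists_orth {k N : ℕ} (hk : k ≤ N) (m : Matrix (Fin k) (Fin N) ℝ) :
    ∃ u : Mat N, u * uᵀ = 1 ∧ m * u = msqrt (m * mᵀ) * emb hk := by
  classical
  have hs : (m * mᵀ).PosSemidef := posSemidef_mul_transpose m
  obtain ⟨Q, d, hQtQ, hQQt, hd0, hdle, htr0, hdecomp, hsqrt⟩ := mat_spectral (m * mᵀ) hs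
  set qv : Fin k → (Fin k → ℝ) := fun i p => Q p i with hqv
  have hq_dot : ∀ i j, qv i ⬝ᵥ qv j = if i = j then 1 else 0 := by
    intro i j
    calc qv i ⬝ᵥ qv j = (Qᵀ * Q) i j := by
          simp [Matrix.mul_apply, dotProduct, hqv]
      _ = if i = j then 1 else 0 := by rw [hQtQ, Matrix.one_apply]
  have hq_eig : ∀ i, (m * mᵀ) *ᵥ qv i = d i • qv i := by
    intro i
    have hSQ : (m * mᵀ) * Q = Q * Matrix.diagonal d := by
      conv_lhs => rw [hdecomp]
      rw [Matrix.mul_assoc, hQtQ, Matrix.mul_one]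
    funext p
    calc ((m * mᵀ) *ᵥ qv i) p = ((m * mᵀ) * Q) p i := by
          simp [Matrix.mulVec, dotProduct, Matrix.mul_apply, hqv]
      _ = Q p i * d i := by rw [hSQ, Matrix.mul_diagonal]
      _ = (d i • qv i) p := by simp [hqv, mul_comm]
  have hdd : ∀ x y : Fin k → ℝ, (mᵀ *ᵥ x) ⬝ᵥ (mᵀ *ᵥ y) = ((m * mᵀ) *ᵥ x) ⬝ᵥ y := by
    intro x y
    calc (mᵀ *ᵥ x) ⬝ᵥ (mᵀ *ᵥ y)
        = ((mᵀ *ᵥ x) ᵥ* mᵀ) ⬝ᵥ y := Matrix.dotProduct_mulVec _ _ _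
      _ = (m *ᵥ (mᵀ *ᵥ x)) ⬝ᵥ y := by rw [Matrix.vecMul_transpose]
      _ = ((m * mᵀ) *ᵥ x) ⬝ᵥ y := by rw [Matrix.mulVec_mulVec]
  have hdot_mt : ∀ i j, (mᵀ *ᵥ qv i) ⬝ᵥ (mᵀ *ᵥ qv j) = d i * (if i = j then 1 else 0) := by
    intro i j
    rw [hdd, hq_eig, smul_dotProduct, hq_dot]
    simp
  have hmtq0 : ∀ i, d i = 0 → mᵀ *ᵥ qv i = 0 := by
    intro i h0
    have h1 := hdot_mt i i
    rw [h0, zero_mul] at h1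
    exact dotProduct_self_eq_zero.mp h1
  set f : Fin k → (Fin N → ℝ) := fun i => (Real.sqrt (d i))⁻¹ • (mᵀ *ᵥ qv i) with hf
  set v : Fin N → EuclideanSpace ℝ (Fin N) := fun j => if h : (j : ℕ) < k then WithLp.toLp 2 (f ⟨j, h⟩) else 0
    with hv
  set sset : Set (Fin N) := {j | ∃ h : (j : ℕ) < k, d ⟨j, h⟩ ≠ 0} with hsset
  have hinner : ∀ x y : EuclideanSpace ℝ (Fin N),
      (inner ℝ x y : ℝ) = (x : Fin N → ℝ) ⬝ᵥ (y : Fin N → ℝ) := by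
    intro x y
    simp [PiLp.inner_apply, dotProduct, RCLike.inner_apply, mul_comm]
  have hfdot : ∀ (i j : Fin k), d i ≠ 0 → d j ≠ 0 →
      (f i) ⬝ᵥ (f j) = if i = j then 1 else 0 := by
    intro i j hdi hdj
    have hdi' : 0 < d i := lt_of_le_of_ne (hd0 i) (Ne.symm hdi)
    rw [hf]
    simp only [smul_dotProduct, dotProduct_smul, hdot_mt, smul_eq_mul]
    by_cases hij : i = j
    · subst hij
      rw [if_pos rfl]
      have hsq : Real.sqrt (d i) * Real.sqrt (d i) = d i := Real.mul_self_sqrt (hd0 i)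
      have hsne : Real.sqrt (d i) ≠ 0 := by
        refine fun h => hdi ?_
        rw [← hsq, h, mul_zero]
      field_simp
      rw [Real.sq_sqrt (hd0 i)]
    · rw [if_neg hij]
      ring
  have horth : Orthonormal ℝ (sset.restrict v) := by
    rw [orthonormal_iff_ite]
    rintro ⟨i, hik, hdi⟩ ⟨j, hjk, hdj⟩
    have hvi : v i = WithLp.toLp 2 (f ⟨i, hik⟩) := dif_pos hik
    have hvj : v j = WithLp.toLp 2 (f ⟨j, hjk⟩) := dif_pos hjk
    simp only [Set.restrict_apply, hinner, hvi, hvj, WithLp.ofLp_toLp]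
    rw [show (sset.restrict v ⟨i, hik, hdi⟩).ofLp = f ⟨i, hik⟩ from congrArg WithLp.ofLp hvi,
      show (sset.restrict v ⟨j, hjk, hdj⟩).ofLp = f ⟨j, hjk⟩ from congrArg WithLp.ofLp hvj]
    rw [hfdot _ _ hdi hdj]
    congr 1
    simp only [eq_iff_iff]
    constructor
    · intro h
      have hval : (i : ℕ) = (j : ℕ) := by injection h
      exact Subtype.ext (Fin.ext hval)
    · intro h
      have hij : i = j := Subtype.mk_eq_mk.mp h
      subst hij
      rfl
  have hcard : Module.finrank ℝ (EuclideanSpace ℝ (Fin N)) = Fintype.card (Fin N) := by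
    simp [finrank_euclideanSpace_fin]
  obtain ⟨b, hb⟩ := horth.exists_orthonormalBasis_extension_of_card_eq hcard
  set bv : Fin N → (Fin N → ℝ) := fun j => (b j : Fin N → ℝ) with hbv
  have hbo : ∀ i j, bv i ⬝ᵥ bv j = if i = j then 1 else 0 := by
    intro i j
    have h1 := orthonormal_iff_ite.mp b.orthonormal i j
    rw [hinner] at h1
    exact h1
  have hbv_in : ∀ (i : Fin k), d i ≠ 0 → bv (Fin.castLE hk i) = f i := by
    intro i hdi
    have h1 : ((Fin.castLE hk i : Fin N) : ℕ) < k := by simpa using i.isLt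
    have h2 : (⟨((Fin.castLE hk i : Fin N) : ℕ), h1⟩ : Fin k) = i := Fin.ext rfl
    have hmem : (Fin.castLE hk i : Fin N) ∈ sset := ⟨h1, by rw [h2]; exact hdi⟩
    have h3 := hb _ hmem
    have h4 : v (Fin.castLE hk i) = WithLp.toLp 2 (f ⟨((Fin.castLE hk i : Fin N) : ℕ), h1⟩) :=
      dif_pos h1
    calc bv (Fin.castLE hk i) = (v (Fin.castLE hk i)).ofLp := congrArg WithLp.ofLp h3
      _ = f ⟨((Fin.castLE hk i : Fin N) : ℕ), h1⟩ := congrArg WithLp.ofLp h4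
      _ = f i := by rw [h2]
  have hm_bv0 : ∀ j : Fin N, j ∉ sset → m *ᵥ bv j = 0 := by
    intro j hj
    have hcomp : ∀ i : Fin k, qv i ⬝ᵥ (m *ᵥ bv j) = 0 := by
      intro i
      have h1 : qv i ⬝ᵥ (m *ᵥ bv j) = (mᵀ *ᵥ qv i) ⬝ᵥ bv j := by
        rw [Matrix.dotProduct_mulVec, ← Matrix.mulVec_transpose]
      rw [h1]
      by_cases hdi : d i = 0
      · rw [hmtq0 i hdi, zero_dotProduct]
      · have hsne : Real.sqrt (d i) ≠ 0 :=
          Real.sqrt_ne_zero'.mpr (lt_of_le_of_ne (hd0 i) (Ne.symm hdi))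
        have h2 : mᵀ *ᵥ qv i = Real.sqrt (d i) • f i := by
          rw [hf]
          simp only [smul_smul, mul_inv_cancel₀ hsne, one_smul]
        rw [h2, smul_dotProduct]
        have h3 : f i ⬝ᵥ bv j = 0 := by
          rw [← hbv_in i hdi, hbo, if_neg]
          intro heq
          apply hj
          rw [← heq]
          refine ⟨by simpa using i.isLt, ?_⟩
          rw [show (⟨((Fin.castLE hk i : Fin N) : ℕ), by simpa using i.isLt⟩ : Fin k) = i from
            Fin.ext rfl]
          exact hdi
        rw [h3, smul_eq_mul, mul_zero]
    have h4 : Qᵀ *ᵥ (m *ᵥ bv j) = 0 := by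
      funext p
      have h5 : (Qᵀ *ᵥ (m *ᵥ bv j)) p = qv p ⬝ᵥ (m *ᵥ bv j) := by
        simp [Matrix.mulVec, dotProduct, hqv]
      rw [h5, hcomp p]
      rfl
    have h5 : m *ᵥ bv j = Q *ᵥ (Qᵀ *ᵥ (m *ᵥ bv j)) := by
      rw [Matrix.mulVec_mulVec, hQQt, Matrix.one_mulVec]
    rw [h5, h4, Matrix.mulVec_zero]
  have hm_bv : ∀ j : Fin N, m *ᵥ bv j
      = if h : (j : ℕ) < k then Real.sqrt (d ⟨j, h⟩) • qv ⟨j, h⟩ else 0 := by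
    intro j
    by_cases h : (j : ℕ) < k
    · rw [dif_pos h]
      by_cases hdj : d ⟨j, h⟩ = 0
      · rw [hdj, Real.sqrt_zero, zero_smul]
        apply hm_bv0
        rintro ⟨h', hd'⟩
        exact hd' (by rw [show (⟨(j : ℕ), h'⟩ : Fin k) = ⟨(j : ℕ), h⟩ from rfl]; exact hdj)
      · have hcast : Fin.castLE hk ⟨(j : ℕ), h⟩ = j := Fin.ext rfl
        have h1 := hbv_in ⟨(j : ℕ), h⟩ hdj
        rw [hcast] at h1
        have hsne : Real.sqrt (d ⟨(j : ℕ), h⟩) ≠ 0 :=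
          Real.sqrt_ne_zero'.mpr (lt_of_le_of_ne (hd0 _) (Ne.symm hdj))
        rw [h1, hf]
        simp only [Matrix.mulVec_smul, Matrix.mulVec_mulVec, hq_eig, smul_smul]
        congr 1
        field_simp
        rw [Real.sq_sqrt (hd0 _)]
    · rw [dif_neg h]
      apply hm_bv0
      rintro ⟨h', _⟩
      exact h h'
  -- assemble the matrices
  set Bm : Mat N := Matrix.of (fun p j => bv j p) with hBm
  have hBtB : Bmᵀ * Bm = 1 := by
    ext i j
    calc (Bmᵀ * Bm) i j = bv i ⬝ᵥ bv j := by
          simp [Matrix.mul_apply, dotProduct, hBm]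
      _ = (1 : Mat N) i j := by rw [hbo, Matrix.one_apply]
  have hBBt : Bm * Bmᵀ = 1 := mul_eq_one_comm.mp hBtB
  have hmB : m * Bm = Q * Matrix.diagonal (fun i => Real.sqrt (d i)) * emb hk := by
    ext i j
    have hL : (m * Bm) i j = (m *ᵥ bv j) i := by
      simp [Matrix.mul_apply, Matrix.mulVec, dotProduct, hBm]
    have hR : (Q * Matrix.diagonal (fun i => Real.sqrt (d i)) * emb hk) i j
        = ∑ l, (Q i l * Real.sqrt (d l)) * (if (Fin.castLE hk l : Fin N) = j then 1 else 0) := by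
      rw [Matrix.mul_apply]
      refine Finset.sum_congr rfl fun l _ => ?_
      rw [Matrix.mul_diagonal]
      rfl
    rw [hL, hm_bv, hR]
    by_cases h : (j : ℕ) < k
    · rw [dif_pos h]
      rw [Finset.sum_eq_single (⟨(j : ℕ), h⟩ : Fin k)]
      · rw [if_pos (show (Fin.castLE hk ⟨(j : ℕ), h⟩ : Fin N) = j from Fin.ext rfl), mul_one]
        simp [hqv, mul_comm]
      · intro l _ hl
        rw [if_neg, mul_zero]
        intro heq
        exact hl (Fin.ext (by simpa using congrArg Fin.val heq))
      · simp
    · rw [dif_neg h]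
      rw [Finset.sum_eq_zero, Pi.zero_apply]
      intro l _
      rw [if_neg, mul_zero]
      intro heq
      exact h (heq ▸ l.isLt)
  -- the rotation R
  have hE : emb hk * (emb hk)ᵀ = 1 := emb_mul_embT hk
  set A1 : Mat N := (emb hk)ᵀ * Qᵀ * emb hk with hA1
  set A2 : Mat N := (emb hk)ᵀ * Q * emb hk with hA2
  set Pm : Mat N := (emb hk)ᵀ * emb hk with hPm
  have hA1A2 : A1 * A2 = Pm := by
    rw [hA1, hA2, hPm]
    calc ((emb hk)ᵀ * Qᵀ * emb hk) * ((emb hk)ᵀ * Q * emb hk)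
        = (emb hk)ᵀ * (Qᵀ * (emb hk * ((emb hk)ᵀ * (Q * emb hk)))) := by
          simp only [Matrix.mul_assoc]
      _ = (emb hk)ᵀ * (Qᵀ * (Q * emb hk)) := by
          rw [← Matrix.mul_assoc (emb hk), hE, Matrix.one_mul]
      _ = (emb hk)ᵀ * emb hk := by rw [← Matrix.mul_assoc Qᵀ, hQtQ, Matrix.one_mul]
  have hA2A1 : A2 * A1 = Pm := by
    rw [hA1, hA2, hPm]
    calc ((emb hk)ᵀ * Q * emb hk) * ((emb hk)ᵀ * Qᵀ * emb hk)
        = (emb hk)ᵀ * (Q * (emb hk * ((emb hk)ᵀ * (Qᵀ * emb hk)))) := by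
          simp only [Matrix.mul_assoc]
      _ = (emb hk)ᵀ * (Q * (Qᵀ * emb hk)) := by
          rw [← Matrix.mul_assoc (emb hk), hE, Matrix.one_mul]
      _ = (emb hk)ᵀ * emb hk := by rw [← Matrix.mul_assoc Q, hQQt, Matrix.one_mul]
  have hA1P : A1 * Pm = A1 := by
    rw [hA1, hPm]
    calc ((emb hk)ᵀ * Qᵀ * emb hk) * ((emb hk)ᵀ * emb hk)
        = (emb hk)ᵀ * (Qᵀ * (emb hk * ((emb hk)ᵀ * emb hk))) := by
          simp only [Matrix.mul_assoc]
      _ = (emb hk)ᵀ * (Qᵀ * emb hk) := by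
          rw [← Matrix.mul_assoc (emb hk), hE, Matrix.one_mul]
      _ = (emb hk)ᵀ * Qᵀ * emb hk := by rw [Matrix.mul_assoc]
  have hA2P : A2 * Pm = A2 := by
    rw [hA2, hPm]
    calc ((emb hk)ᵀ * Q * emb hk) * ((emb hk)ᵀ * emb hk)
        = (emb hk)ᵀ * (Q * (emb hk * ((emb hk)ᵀ * emb hk))) := by
          simp only [Matrix.mul_assoc]
      _ = (emb hk)ᵀ * (Q * emb hk) := by
          rw [← Matrix.mul_assoc (emb hk), hE, Matrix.one_mul]
      _ = (emb hk)ᵀ * Q * emb hk := by rw [Matrix.mul_assoc]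
  have hPA2 : Pm * A2 = A2 := by
    rw [hA2, hPm]
    calc ((emb hk)ᵀ * emb hk) * ((emb hk)ᵀ * Q * emb hk)
        = (emb hk)ᵀ * (emb hk * ((emb hk)ᵀ * (Q * emb hk))) := by
          simp only [Matrix.mul_assoc]
      _ = (emb hk)ᵀ * (Q * emb hk) := by
          rw [← Matrix.mul_assoc (emb hk), hE, Matrix.one_mul]
      _ = (emb hk)ᵀ * Q * emb hk := by rw [Matrix.mul_assoc]
  have hPA1 : Pm * A1 = A1 := by
    rw [hA1, hPm]
    calc ((emb hk)ᵀ * emb hk) * ((emb hk)ᵀ * Qᵀ * emb hk)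
        = (emb hk)ᵀ * (emb hk * ((emb hk)ᵀ * (Qᵀ * emb hk))) := by
          simp only [Matrix.mul_assoc]
      _ = (emb hk)ᵀ * (Qᵀ * emb hk) := by
          rw [← Matrix.mul_assoc (emb hk), hE, Matrix.one_mul]
      _ = (emb hk)ᵀ * Qᵀ * emb hk := by rw [Matrix.mul_assoc]
  have hPP : Pm * Pm = Pm := by
    rw [hPm]
    calc ((emb hk)ᵀ * emb hk) * ((emb hk)ᵀ * emb hk)
        = (emb hk)ᵀ * (emb hk * ((emb hk)ᵀ * emb hk)) := by
          simp only [Matrix.mul_assoc]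
      _ = (emb hk)ᵀ * emb hk := by
          rw [← Matrix.mul_assoc (emb hk), hE, Matrix.one_mul]
  set R : Mat N := A1 + (1 - Pm) with hRdef
  have hPt : Pmᵀ = Pm := by
    rw [hPm, Matrix.transpose_mul, Matrix.transpose_transpose]
  have hA1t : A1ᵀ = A2 := by
    rw [hA1, hA2, Matrix.transpose_mul, Matrix.transpose_mul, Matrix.transpose_transpose,
      Matrix.transpose_transpose, ← Matrix.mul_assoc]
  have hRt : Rᵀ = A2 + (1 - Pm) := by
    rw [hRdef, Matrix.transpose_add, Matrix.transpose_sub, Matrix.transpose_one, hA1t, hPt]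
  have expand : ∀ X Y XY PX YP : Mat N, X * Y = XY → X * Pm = PX → Pm * Y = YP →
      (X + (1 - Pm)) * (Y + (1 - Pm)) = XY + (X - PX) + ((Y - YP) + (1 - Pm - (Pm - Pm * Pm))) := by
    intro X Y XY PX YP h1 h2 h3
    subst h1; subst h2; subst h3
    noncomm_ring
  have hRRt : R * Rᵀ = 1 := by
    rw [hRdef, hRt, expand A1 A2 Pm A1 A2 hA1A2 hA1P hPA2, hPP]
    abel
  have hRtR : Rᵀ * R = 1 := by
    rw [hRdef, hRt, expand A2 A1 Pm A2 A1 hA2A1 hA2P hPA1, hPP]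
    abel
  have hembA1 : emb hk * A1 = Qᵀ * emb hk := by
    rw [hA1]
    calc emb hk * ((emb hk)ᵀ * Qᵀ * emb hk)
        = (emb hk * (emb hk)ᵀ) * (Qᵀ * emb hk) := by simp only [Matrix.mul_assoc]
      _ = Qᵀ * emb hk := by rw [hE, Matrix.one_mul]
  have hembP : emb hk * Pm = emb hk := by
    rw [hPm, ← Matrix.mul_assoc, hE, Matrix.one_mul]
  have hembR : emb hk * R = Qᵀ * emb hk := by
    rw [hRdef, Matrix.mul_add, Matrix.mul_sub, Matrix.mul_one, hembA1, hembP]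
    simp
  refine ⟨Bm * R, ?_, ?_⟩
  · calc (Bm * R) * (Bm * R)ᵀ = (Bm * R) * (Rᵀ * Bmᵀ) := by rw [Matrix.transpose_mul]
      _ = Bm * ((R * Rᵀ) * Bmᵀ) := by simp only [Matrix.mul_assoc]
      _ = 1 := by rw [hRRt, Matrix.one_mul, hBBt]
  · calc m * (Bm * R) = (m * Bm) * R := (Matrix.mul_assoc _ _ _).symm
      _ = (Q * Matrix.diagonal (fun i => Real.sqrt (d i))) * (emb hk * R) := by
          rw [hmB, Matrix.mul_assoc]
      _ = (Q * Matrix.diagonal (fun i => Real.sqrt (d i))) * (Qᵀ * emb hk) := by rw [hembR]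
      _ = msqrt (m * mᵀ) * emb hk := by rw [hsqrt]; simp only [Matrix.mul_assoc]
end
noncomputable section
open Matrix

lemma key_lemma {k N : ℕ} (hk : k ≤ N) (a : Mat N) :
    ∃ u : Mat N, u * uᵀ = 1 ∧ ∀ bm : Mat N,
      subK hk (a * (u * bm * uᵀ) * aᵀ)
        = msqrt (subK hk (a * aᵀ)) * subK hk bm * msqrt (subK hk (a * aᵀ)) := by
  have hmm : (emb hk * a) * (emb hk * a)ᵀ = subK hk (a * aᵀ) := by
    rw [subK_eq hk, Matrix.transpose_mul]
    simp only [Matrix.mul_assoc]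
  obtain ⟨u, hu, hmu⟩ := exists_orth hk (emb hk * a)
  rw [hmm] at hmu
  refine ⟨u, hu, fun bm => ?_⟩
  have ht : (msqrt (subK hk (a * aᵀ)))ᵀ = msqrt (subK hk (a * aᵀ)) := msqrt_transpose _
  calc subK hk (a * (u * bm * uᵀ) * aᵀ)
      = (emb hk * a * u) * bm * (emb hk * a * u)ᵀ := by
        rw [subK_eq hk]
        simp only [Matrix.transpose_mul, Matrix.mul_assoc]
    _ = (msqrt (subK hk (a * aᵀ)) * emb hk) * bm * (msqrt (subK hk (a * aᵀ)) * emb hk)ᵀ := by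
        rw [hmu]
    _ = msqrt (subK hk (a * aᵀ)) * (emb hk * bm * (emb hk)ᵀ) *
          (msqrt (subK hk (a * aᵀ)))ᵀ := by
        rw [Matrix.transpose_mul]
        simp only [Matrix.mul_assoc]
    _ = msqrt (subK hk (a * aᵀ)) * subK hk bm * msqrt (subK hk (a * aᵀ)) := by
        rw [← subK_eq hk, ht]

instance matSecondCountable {n : ℕ} : SecondCountableTopology (Mat n) :=
  inferInstanceAs (SecondCountableTopology (Fin n → Fin n → ℝ))

lemma continuous_subK {k N : ℕ} (hk : k ≤ N) {X : Type*} [TopologicalSpace X]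
    {f : X → Mat N} (hf : Continuous f) : Continuous fun x => subK hk (f x) :=
  hf.matrix_submatrix _ _

end

/-- If `A` and `B` are independent and `B` is orthogonally invariant, then
for every `1 ≤ k ≤ N`, the `k × k` leading principal submatrix `(A B Aᵀ)^{[k]}` has the same
distribution as `((AAᵀ)^{[k]})^{1/2} B^{[k]} ((AAᵀ)^{[k]})^{1/2}`. -/
theorem principal_submatrix_mult_convolution
    {N k : ℕ} (hk1 : 1 ≤ k) (hk : k ≤ N)
    {Ω : Type*} [MeasurableSpace Ω] (P : Measure Ω) [IsProbabilityMeasure P]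
    (A B : Ω → Mat N) (hA : Measurable A) (hB : Measurable B)
    (hindep : IndepFun A B P)
    (hBinv : ∀ u : Mat N, u * uᵀ = 1 →
      Measure.map (fun ω => u * B ω * uᵀ) P = Measure.map B P) :
    Measure.map (fun ω => subK hk (A ω * B ω * (A ω)ᵀ)) P
      = Measure.map (fun ω =>
          msqrt (subK hk (A ω * (A ω)ᵀ)) * subK hk (B ω) * msqrt (subK hk (A ω * (A ω)ᵀ))) P := by
  classical
  have hmF : Measurable fun p : Mat N × Mat N => subK hk (p.1 * p.2 * p.1ᵀ) :=
    (continuous_subK hk ((continuous_fst.matrix_mul continuous_snd).matrix_mul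
      continuous_fst.matrix_transpose)).measurable
  have hmG : Measurable fun p : Mat N × Mat N =>
      msqrt (subK hk (p.1 * p.1ᵀ)) * subK hk p.2 * msqrt (subK hk (p.1 * p.1ᵀ)) := by
    have h1 : Measurable fun p : Mat N × Mat N => msqrt (subK hk (p.1 * p.1ᵀ)) :=
      measurable_msqrt.comp (continuous_subK hk
        (continuous_fst.matrix_mul continuous_fst.matrix_transpose)).measurable
    have h2 : Measurable fun p : Mat N × Mat N => subK hk p.2 :=
      (continuous_subK hk continuous_snd).measurable
    exact measurable_matMul (measurable_matMul h1 h2) h1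
  haveI : IsProbabilityMeasure (P.map A) := Measure.isProbabilityMeasure_map hA.aemeasurable
  haveI : IsProbabilityMeasure (P.map B) := Measure.isProbabilityMeasure_map hB.aemeasurable
  have hABm : Measurable fun ω => (A ω, B ω) := hA.prodMk hB
  have hjoint : P.map (fun ω => (A ω, B ω)) = (P.map A).prod (P.map B) :=
    (ProbabilityTheory.indepFun_iff_map_prod_eq_prod_map_map
      hA.aemeasurable hB.aemeasurable).mp hindep
  show Measure.map ((fun p : Mat N × Mat N => subK hk (p.1 * p.2 * p.1ᵀ)) ∘
        fun ω => (A ω, B ω)) P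
      = Measure.map ((fun p : Mat N × Mat N =>
          msqrt (subK hk (p.1 * p.1ᵀ)) * subK hk p.2 * msqrt (subK hk (p.1 * p.1ᵀ))) ∘
        fun ω => (A ω, B ω)) P
  rw [← Measure.map_map hmF hABm, ← Measure.map_map hmG hABm, hjoint]
  ext S hS
  rw [Measure.map_apply hmF hS, Measure.map_apply hmG hS,
    Measure.prod_apply (hmF hS), Measure.prod_apply (hmG hS)]
  refine MeasureTheory.lintegral_congr fun a => ?_
  obtain ⟨u, hu, hkey⟩ := key_lemma hk a
  have hset1 : (Prod.mk a ⁻¹'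
        ((fun p : Mat N × Mat N => subK hk (p.1 * p.2 * p.1ᵀ)) ⁻¹' S))
      = (fun bm : Mat N => subK hk (a * bm * aᵀ)) ⁻¹' S := rfl
  have hset2 : (Prod.mk a ⁻¹' ((fun p : Mat N × Mat N =>
        msqrt (subK hk (p.1 * p.1ᵀ)) * subK hk p.2 * msqrt (subK hk (p.1 * p.1ᵀ))) ⁻¹' S))
      = (fun bm : Mat N =>
          msqrt (subK hk (a * aᵀ)) * subK hk bm * msqrt (subK hk (a * aᵀ))) ⁻¹' S := rfl
  rw [hset1, hset2]
  have hmeas1 : Measurable fun bm : Mat N => subK hk (a * bm * aᵀ) :=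
    (continuous_subK hk ((continuous_const.matrix_mul continuous_id).matrix_mul
      continuous_const)).measurable
  have hmeas2 : Measurable fun bm : Mat N =>
      msqrt (subK hk (a * aᵀ)) * subK hk bm * msqrt (subK hk (a * aᵀ)) := by
    exact measurable_matMul (measurable_matMul measurable_const
      (continuous_subK hk continuous_id).measurable) measurable_const
  have hBu : Measurable fun ω => u * B ω * uᵀ :=
    ((continuous_const.matrix_mul continuous_id).matrix_mul
      continuous_const).measurable.comp hB
  calc (P.map B) ((fun bm : Mat N => subK hk (a * bm * aᵀ)) ⁻¹' S)
      = (P.map (fun ω => u * B ω * uᵀ)) ((fun bm : Mat N => subK hk (a * bm * aᵀ)) ⁻¹' S) := by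
        rw [hBinv u hu]
    _ = P ((fun ω => u * B ω * uᵀ) ⁻¹' ((fun bm : Mat N => subK hk (a * bm * aᵀ)) ⁻¹' S)) :=
        Measure.map_apply hBu (hmeas1 hS)
    _ = P ((fun ω => msqrt (subK hk (a * aᵀ)) * subK hk (B ω) *
          msqrt (subK hk (a * aᵀ))) ⁻¹' S) := by
        congr 1
        ext ω
        simp only [Set.mem_preimage]
        rw [hkey (B ω)]
    _ = (P.map B) ((fun bm : Mat N =>
          msqrt (subK hk (a * aᵀ)) * subK hk bm * msqrt (subK hk (a * aᵀ))) ⁻¹' S) :=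
        (Measure.map_apply hB (hmeas2 hS)).symm
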